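/- arXiv:2105.11235 — 5 statements merged into one kernel-verified Lean document; each statement's English description precedes it below -/
import Mathlib

section
/- Let G be a graph with a cutvertex v, let C be the vertex set of a connected component of G − v, let G₁ = G[C ∪ {v}] and G₂ = G − C. If both G₁ and G₂ admit distance-2 colorings with k colors, where k ≥ deg_{G₁}(v) + deg_{G₂}(v) + 1, then G admits a distance-2 coloring with k colors. -/
def IsDist2Coloring {W : Type*} (H : SimpleGraph W) {k : ℕ} (c : W → Fin k) : Prop :=
  ∀ u w, u ≠ w → (H.Adj u w ∨ ∃ x, H.Adj u x ∧ H.Adj x w) → c u ≠ c w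

lemma exists_good_inj {k : ℕ} (A B : Finset (Fin k)) (a₀ b₀ : Fin k)
    (ha : a₀ ∉ A) (hb : b₀ ∉ B) (hcard : A.card + B.card + 1 ≤ k) :
    ∃ g : Fin k → Fin k, Function.Injective g ∧ g a₀ = b₀ ∧
      ∀ x ∈ A, g x ∉ insert b₀ B := by
  classical
  have hD : (insert b₀ B).card = B.card + 1 := Finset.card_insert_of_notMem hb
  have havail : A.card ≤ ((insert b₀ B)ᶜ : Finset (Fin k)).card := by
    rw [Finset.card_compl, hD]
    simp only [Fintype.card_fin]
    omega
  obtain ⟨T, hTsub, hTcard⟩ := Finset.exists_subset_card_eq havail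
  have hbT : b₀ ∉ T := fun h => by
    have := hTsub h
    simp at this
  have hσc : Fintype.card A = Fintype.card T := by
    rw [Fintype.card_coe, Fintype.card_coe, hTcard]
  let σ : A ≃ T := Fintype.equivOfCardEq hσc
  have hτc : Fintype.card ((insert a₀ A)ᶜ : Finset (Fin k)) =
      Fintype.card ((insert b₀ T)ᶜ : Finset (Fin k)) := by
    rw [Fintype.card_coe, Fintype.card_coe, Finset.card_compl, Finset.card_compl,
      Finset.card_insert_of_notMem ha, Finset.card_insert_of_notMem hbT, hTcard]
  let τ : ((insert a₀ A)ᶜ : Finset (Fin k)) ≃ ((insert b₀ T)ᶜ : Finset (Fin k)) :=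
    Fintype.equivOfCardEq hτc
  set g : Fin k → Fin k := fun x => if hx : x = a₀ then b₀ else if hA : x ∈ A
    then (σ ⟨x, hA⟩ : Fin k)
    else (τ ⟨x, by simp [hx, hA]⟩ : Fin k) with hgdef
  have hg0 : g a₀ = b₀ := by simp [hgdef]
  have hgA : ∀ x (hx : x ≠ a₀) (hA : x ∈ A), g x = (σ ⟨x, hA⟩ : Fin k) := by
    intro x hx hA
    rw [hgdef]
    simp only
    rw [dif_neg hx, dif_pos hA]
  have hgAT : ∀ x ∈ A, g x ∈ T := by
    intro x hxA
    have hx : x ≠ a₀ := fun h => ha (h ▸ hxA)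
    rw [hgA x hx hxA]
    exact (σ ⟨x, hxA⟩).2
  have hgC : ∀ x, x ≠ a₀ → x ∉ A → g x ∈ (insert b₀ T)ᶜ := by
    intro x hx hA
    rw [hgdef]
    simp only
    rw [dif_neg hx, dif_neg hA]
    exact (τ ⟨x, by simp [hx, hA]⟩).2
  refine ⟨g, ?_, hg0, ?_⟩
  · intro x y hxy
    by_cases hx : x = a₀ <;> by_cases hy : y = a₀
    · rw [hx, hy]
    · exfalso
      rw [hx, hg0] at hxy
      by_cases hyA : y ∈ A
      · exact hbT (hxy ▸ hgAT y hyA)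
      · have := hgC y hy hyA
        rw [← hxy] at this; simp at this
    · exfalso
      rw [hy, hg0] at hxy
      by_cases hxA : x ∈ A
      · exact hbT (hxy ▸ hgAT x hxA)
      · have := hgC x hx hxA
        rw [hxy] at this; simp at this
    · by_cases hxA : x ∈ A <;> by_cases hyA : y ∈ A
      · rw [hgA x hx hxA, hgA y hy hyA] at hxy
        exact congrArg Subtype.val (σ.injective (Subtype.ext hxy))
      · exfalso
        have h1 := hgAT x hxA
        have h2 := hgC y hy hyA
        rw [← hxy] at h2
        simp only [Finset.mem_compl, Finset.mem_insert] at h2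
        exact h2 (Or.inr h1)
      · exfalso
        have h1 := hgAT y hyA
        have h2 := hgC x hx hxA
        rw [hxy] at h2
        simp only [Finset.mem_compl, Finset.mem_insert] at h2
        exact h2 (Or.inr h1)
      · have hxm : x ∈ (insert a₀ A)ᶜ := by simp [hx, hxA]
        have hym : y ∈ (insert a₀ A)ᶜ := by simp [hy, hyA]
        have ex : g x = (τ ⟨x, hxm⟩ : Fin k) := by
          rw [hgdef]; simp only; rw [dif_neg hx, dif_neg hxA]
        have ey : g y = (τ ⟨y, hym⟩ : Fin k) := by
          rw [hgdef]; simp only; rw [dif_neg hy, dif_neg hyA]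
        rw [ex, ey] at hxy
        exact congrArg Subtype.val (τ.injective (Subtype.ext hxy))
  · intro x hxA hmem
    have h1 := hgAT x hxA
    have h1' : g x ∈ (insert b₀ B)ᶜ := hTsub h1
    simp only [Finset.mem_compl] at h1'
    exact h1' hmem

/-- If `v` is a cutvertex of `G`, `C` is the vertex set of a connected
component of `G - v`, `G₁ = G[C ∪ {v}]`, `G₂ = G - C`, and both `G₁` and `G₂`
admit distance-2 colorings with `k` colors where
`k ≥ deg_{G₁}(v) + deg_{G₂}(v) + 1`, then `G` admits a distance-2 coloring
with `k` colors. -/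
theorem stmt4 {V : Type*} [Fintype V] [DecidableEq V] (G : SimpleGraph V)
    [DecidableRel G.Adj] (v : V) (C : Finset V) (k : ℕ)
    (hvC : v ∉ C)
    (hconn : (G.induce (C : Set V)).Connected)
    (hclosed : ∀ u ∈ C, ∀ w, G.Adj u w → w = v ∨ w ∈ C)
    (hk : (Finset.univ.filter (fun u => u ∈ C ∧ G.Adj v u)).card
        + (Finset.univ.filter (fun u => u ∉ C ∧ G.Adj v u)).card + 1 ≤ k)
    (h1 : ∃ c : ((C : Set V) ∪ {v} : Set V) → Fin k,
      IsDist2Coloring (G.induce ((C : Set V) ∪ {v})) c)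
    (h2 : ∃ c : (((C : Set V)ᶜ : Set V)) → Fin k,
      IsDist2Coloring (G.induce ((C : Set V)ᶜ)) c) :
    ∃ c : V → Fin k, IsDist2Coloring G c := by
  classical
  have hk0 : 0 < k := by omega
  set s₁ : Set V := (C : Set V) ∪ {v} with hs₁def
  set s₂ : Set V := ((C : Set V)ᶜ) with hs₂def
  obtain ⟨c₁, hc₁⟩ := h1
  obtain ⟨c₂, hc₂⟩ := h2
  have hCs₁ : ∀ u ∈ C, u ∈ s₁ := fun u hu => Or.inl hu
  have hvs₁ : v ∈ s₁ := Or.inr rfl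
  have hvs₂ : v ∈ s₂ := by simpa [hs₂def] using hvC
  have hncs₂ : ∀ u, u ∉ C → u ∈ s₂ := fun u hu => by simpa [hs₂def] using hu
  set F₁ : V → Fin k := fun u => if h : u ∈ s₁ then c₁ ⟨u, h⟩ else ⟨0, hk0⟩ with hF₁def
  set F₂ : V → Fin k := fun u => if h : u ∈ s₂ then c₂ ⟨u, h⟩ else ⟨0, hk0⟩ with hF₂def
  have hF₁ : ∀ u (hu : u ∈ s₁) w (hw : w ∈ s₁), u ≠ w →
      (G.Adj u w ∨ ∃ x ∈ s₁, G.Adj u x ∧ G.Adj x w) → F₁ u ≠ F₁ w := by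
    intro u hu w hw hne hd
    have eu : F₁ u = c₁ ⟨u, hu⟩ := by rw [hF₁def]; simp only; rw [dif_pos hu]
    have ew : F₁ w = c₁ ⟨w, hw⟩ := by rw [hF₁def]; simp only; rw [dif_pos hw]
    rw [eu, ew]
    refine hc₁ ⟨u, hu⟩ ⟨w, hw⟩ (by simpa using hne) ?_
    rcases hd with h | ⟨x, hx, hux, hxw⟩
    · exact Or.inl (by simpa using h)
    · exact Or.inr ⟨⟨x, hx⟩, by simpa using hux, by simpa using hxw⟩
  have hF₂ : ∀ u (hu : u ∈ s₂) w (hw : w ∈ s₂), u ≠ w →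
      (G.Adj u w ∨ ∃ x ∈ s₂, G.Adj u x ∧ G.Adj x w) → F₂ u ≠ F₂ w := by
    intro u hu w hw hne hd
    have eu : F₂ u = c₂ ⟨u, hu⟩ := by rw [hF₂def]; simp only; rw [dif_pos hu]
    have ew : F₂ w = c₂ ⟨w, hw⟩ := by rw [hF₂def]; simp only; rw [dif_pos hw]
    rw [eu, ew]
    refine hc₂ ⟨u, hu⟩ ⟨w, hw⟩ (by simpa using hne) ?_
    rcases hd with h | ⟨x, hx, hux, hxw⟩
    · exact Or.inl (by simpa using h)
    · exact Or.inr ⟨⟨x, hx⟩, by simpa using hux, by simpa using hxw⟩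
  set N₁ : Finset V := Finset.univ.filter (fun u => u ∈ C ∧ G.Adj v u) with hN₁def
  set N₂ : Finset V := Finset.univ.filter (fun u => u ∉ C ∧ G.Adj v u) with hN₂def
  set A : Finset (Fin k) := N₁.image F₁ with hAdef
  set B : Finset (Fin k) := N₂.image F₂ with hBdef
  have hN₁mem : ∀ u, u ∈ N₁ ↔ u ∈ C ∧ G.Adj v u := by
    intro u; simp [hN₁def]
  have hN₂mem : ∀ u, u ∈ N₂ ↔ u ∉ C ∧ G.Adj v u := by
    intro u; simp [hN₂def]
  have hAcard : A.card = N₁.card := by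
    rw [hAdef]
    apply Finset.card_image_of_injOn
    intro x hx y hy hxy
    by_contra hne
    obtain ⟨hxC, hvx⟩ := (hN₁mem x).1 hx
    obtain ⟨hyC, hvy⟩ := (hN₁mem y).1 hy
    exact hF₁ x (hCs₁ x hxC) y (hCs₁ y hyC) hne
      (Or.inr ⟨v, hvs₁, hvx.symm, hvy⟩) hxy
  have ha₀ : F₁ v ∉ A := by
    rw [hAdef]
    intro h
    obtain ⟨x, hx, hxeq⟩ := Finset.mem_image.1 h
    obtain ⟨hxC, hvx⟩ := (hN₁mem x).1 hx
    exact hF₁ x (hCs₁ x hxC) v hvs₁ (fun h => hvC (h ▸ hxC))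
      (Or.inl hvx.symm) hxeq
  have hb₀ : F₂ v ∉ B := by
    rw [hBdef]
    intro h
    obtain ⟨x, hx, hxeq⟩ := Finset.mem_image.1 h
    obtain ⟨hxC, hvx⟩ := (hN₂mem x).1 hx
    exact hF₂ x (hncs₂ x hxC) v hvs₂ hvx.ne'
      (Or.inl hvx.symm) hxeq
  have hcards : A.card + B.card + 1 ≤ k := by
    have hB : B.card ≤ N₂.card := Finset.card_image_le
    rw [hAcard]
    omega
  obtain ⟨g, hginj, hg0, hgav⟩ := exists_good_inj A B (F₁ v) (F₂ v) ha₀ hb₀ hcards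
  set c : V → Fin k := fun u => if u ∈ C then g (F₁ u) else F₂ u with hcdef
  have hc₁' : ∀ u, u ∈ s₁ → c u = g (F₁ u) := by
    intro u hu
    rcases hu with hu | hu
    · rw [hcdef]; simp only; rw [if_pos (Finset.mem_coe.mp hu)]
    · have huv : u = v := hu
      subst huv
      rw [hcdef]; simp only; rw [if_neg hvC, hg0]
  have hc₂' : ∀ u, u ∉ C → c u = F₂ u := by
    intro u hu
    rw [hcdef]; simp only; rw [if_neg hu]
  -- key mixed case
  have hmixed : ∀ u w, u ∈ C → w ∉ C → w ≠ v → u ≠ w →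
      (G.Adj u w ∨ ∃ x, G.Adj u x ∧ G.Adj x w) → c u ≠ c w := by
    intro u w hu hw hwv hne hd
    rcases hd with h | ⟨x, hux, hxw⟩
    · rcases hclosed u hu w h with h' | h'
      · exact absurd h' hwv
      · exact absurd h' hw
    · have hx : x = v := by
        rcases hclosed u hu x hux with h' | h'
        · exact h'
        · rcases hclosed x h' w hxw with h'' | h'' <;>
            [exact absurd h'' hwv; exact absurd h'' hw]
      subst hx
      have huN₁ : u ∈ N₁ := (hN₁mem u).2 ⟨hu, hux.symm⟩
      have hwN₂ : w ∈ N₂ := (hN₂mem w).2 ⟨hw, hxw⟩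
      have hFA : F₁ u ∈ A := by rw [hAdef]; exact Finset.mem_image_of_mem _ huN₁
      have h1 : c u = g (F₁ u) := hc₁' u (hCs₁ u hu)
      have h2 : c w = F₂ w := hc₂' w hw
      have h3 : F₂ w ∈ B := by rw [hBdef]; exact Finset.mem_image_of_mem _ hwN₂
      rw [h1, h2]
      intro heq
      exact hgav (F₁ u) hFA (heq ▸ Finset.mem_insert_of_mem h3)
  -- both in s₁ case
  have hins₁ : ∀ u w, u ∈ s₁ → w ∈ s₁ → u ≠ w →
      (G.Adj u w ∨ ∃ x, G.Adj u x ∧ G.Adj x w) → c u ≠ c w := by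
    intro u w hu hw hne hd
    rw [hc₁' u hu, hc₁' w hw]
    intro heq
    refine hF₁ u hu w hw hne ?_ (hginj heq)
    rcases hd with h | ⟨x, hux, hxw⟩
    · exact Or.inl h
    · refine Or.inr ⟨x, ?_, hux, hxw⟩
      rcases hu with hu' | hu'
      · rcases hclosed u hu' x hux with h' | h'
        · exact h' ▸ hvs₁
        · exact hCs₁ x h'
      · rcases hw with hw' | hw'
        · rcases hclosed w hw' x hxw.symm with h' | h'
          · exact h' ▸ hvs₁
          · exact hCs₁ x h'
        · exact absurd (hu'.trans hw'.symm) hne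
  -- both outside C case
  have houts : ∀ u w, u ∉ C → w ∉ C → u ≠ w →
      (G.Adj u w ∨ ∃ x, G.Adj u x ∧ G.Adj x w) → c u ≠ c w := by
    intro u w hu hw hne hd
    rw [hc₂' u hu, hc₂' w hw]
    refine hF₂ u (hncs₂ u hu) w (hncs₂ w hw) hne ?_
    rcases hd with h | ⟨x, hux, hxw⟩
    · exact Or.inl h
    · refine Or.inr ⟨x, ?_, hux, hxw⟩
      by_cases hxC : x ∈ C
      · exfalso
        have h1 : u = v := by
          rcases hclosed x hxC u hux.symm with h' | h'
          · exact h'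
          · exact absurd h' hu
        have h2 : w = v := by
          rcases hclosed x hxC w hxw with h' | h'
          · exact h'
          · exact absurd h' hw
        exact hne (h1.trans h2.symm)
      · exact hncs₂ x hxC
  refine ⟨c, ?_⟩
  intro u w hne hd
  by_cases hu : u ∈ C <;> by_cases hw : w ∈ C
  · exact hins₁ u w (hCs₁ u hu) (hCs₁ w hw) hne hd
  · by_cases hwv : w = v
    · exact hins₁ u w (hCs₁ u hu) (hwv ▸ hvs₁) hne hd
    · exact hmixed u w hu hw hwv hne hd
  · by_cases huv : u = v
    · exact hins₁ u w (huv ▸ hvs₁) (hCs₁ w hw) hne hd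
    · have := hmixed w u hw hu huv hne.symm ?_
      · exact fun h => this h.symm
      · rcases hd with h | ⟨x, hux, hxw⟩
        · exact Or.inl h.symm
        · exact Or.inr ⟨x, hxw.symm, hux.symm⟩
  · exact houts u w hu hw hne hd
end

section
/- Let G be a graph admitting no distance-2 coloring with k colors, such that every graph G' with |V(G')| + |E(G')| < |V(G)| + |E(G)| and maximum degree at most Δ(G) admits a distance-2 coloring with k colors. If k ≥ 2Δ(G) + 1 then the minimum degree of G is at least 2. -/
/-- If `G` admits no distance-2 coloring with `k` colors, every graph `G'`
with `|V(G')| + |E(G')| < |V(G)| + |E(G)|` and maximum degree at most `Δ(G)`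
admits one, and `k ≥ 2Δ(G) + 1`, then the minimum degree of `G` is at
least 2. -/
theorem stmt5 {V : Type} [Fintype V] [DecidableEq V] (G : SimpleGraph V)
    [DecidableRel G.Adj] (k : ℕ)
    (hG : ¬ ∃ c : V → Fin k, IsDist2Coloring G c)
    (hmin : ∀ (W : Type) [Fintype W] [DecidableEq W] (H : SimpleGraph W),
      ∀ [DecidableRel H.Adj],
      Fintype.card W + H.edgeFinset.card < Fintype.card V + G.edgeFinset.card →
      H.maxDegree ≤ G.maxDegree →
      ∃ c : W → Fin k, IsDist2Coloring H c)
    (hk : 2 * G.maxDegree + 1 ≤ k) :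
    ∀ u : V, 2 ≤ G.degree u := by
  intro u
  by_contra hdeg
  push_neg at hdeg
  have hdeg1 : G.degree u ≤ 1 := by omega
  set W := {v : V // v ≠ u} with hW
  let H : SimpleGraph W := SimpleGraph.comap Subtype.val G
  haveI : DecidableRel H.Adj := fun a b => ‹DecidableRel G.Adj› a.1 b.1
  have hAdj : ∀ a b : W, H.Adj a b ↔ G.Adj a.1 b.1 := fun a b => Iff.rfl
  -- vertex count
  have hcard : Fintype.card W < Fintype.card V := by
    refine Fintype.card_lt_of_injective_of_notMem (Subtype.val) Subtype.val_injective
      (b := u) ?_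
    rintro ⟨w, hw⟩
    exact w.2 hw
  -- edge count
  have hE : H.edgeFinset.card ≤ G.edgeFinset.card := by
    apply Finset.card_le_card_of_injOn (Sym2.map Subtype.val)
    · intro e he
      rw [Finset.mem_coe, SimpleGraph.mem_edgeFinset] at he ⊢
      induction e with
      | h a b => exact he
    · intro e _ e' _ h
      exact Sym2.map.injective Subtype.val_injective h
  have hlt : Fintype.card W + H.edgeFinset.card < Fintype.card V + G.edgeFinset.card :=
    Nat.add_lt_add_of_lt_of_le hcard hE
  -- max degree
  have hΔ : H.maxDegree ≤ G.maxDegree := by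
    apply SimpleGraph.maxDegree_le_of_forall_degree_le
    intro a
    refine le_trans ?_ (G.degree_le_maxDegree a.1)
    unfold SimpleGraph.degree
    apply Finset.card_le_card_of_injOn Subtype.val
    · intro b hb
      rw [Finset.mem_coe, SimpleGraph.mem_neighborFinset] at hb ⊢
      exact hb
    · intro b _ b' _ h
      exact Subtype.val_injective h
  obtain ⟨c', hc'⟩ := hmin W H hlt hΔ
  -- forbidden set
  set S : Finset V := (G.neighborFinset u).biUnion (fun x => insert x (G.neighborFinset x)) with hS
  have hkpos : 0 < k := by omega
  let z : Fin k := ⟨0, hkpos⟩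
  let g : V → Fin k := fun v => if h : v = u then z else c' ⟨v, h⟩
  set F : Finset (Fin k) := (S.erase u).image g with hF
  have hScard : (S.erase u).card < k := by
    rcases Nat.eq_zero_or_pos (G.degree u) with h0 | h1
    · have : G.neighborFinset u = ∅ := Finset.card_eq_zero.mp h0
      have : S = ∅ := by rw [hS, this]; simp
      rw [this]
      simpa using hkpos
    · -- degree u = 1
      have hd1 : (G.neighborFinset u).card = 1 := le_antisymm hdeg1 h1
      obtain ⟨x, hx⟩ := Finset.card_eq_one.mp hd1
      have hux : G.Adj u x := by
        rw [← SimpleGraph.mem_neighborFinset, hx]; simp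
      have hSx : S = insert x (G.neighborFinset x) := by
        rw [hS, hx, Finset.singleton_biUnion]
      have huS : u ∈ S := by
        rw [hSx]
        exact Finset.mem_insert_of_mem (by rwa [SimpleGraph.mem_neighborFinset, SimpleGraph.adj_comm])
      have h1 : (S.erase u).card < S.card := Finset.card_erase_lt_of_mem huS
      have h2 : S.card ≤ 1 + G.degree x := by
        rw [hSx]
        exact le_trans (Finset.card_insert_le _ _) (le_of_eq (Nat.add_comm _ 1))
      have h3 : G.degree x ≤ G.maxDegree := G.degree_le_maxDegree x
      omega
  have hFcard : F.card < k := lt_of_le_of_lt (Finset.card_image_le) hScard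
  have hcompl : (Fᶜ : Finset (Fin k)).Nonempty := by
    rw [← Finset.card_pos, Finset.card_compl, Fintype.card_fin]
    omega
  obtain ⟨a, ha'⟩ := hcompl
  have ha : a ∉ F := Finset.mem_compl.mp ha'
  -- key: any vertex ≠ u at distance ≤ 2 from u is in S.erase u
  have hmem : ∀ w, w ≠ u → (G.Adj u w ∨ ∃ x, G.Adj u x ∧ G.Adj x w) → w ∈ S.erase u := by
    intro w hw hadj
    rw [Finset.mem_erase]
    refine ⟨hw, ?_⟩
    rw [hS, Finset.mem_biUnion]
    rcases hadj with h | ⟨x, h1, h2⟩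
    · exact ⟨w, by rwa [SimpleGraph.mem_neighborFinset], Finset.mem_insert_self _ _⟩
    · exact ⟨x, by rwa [SimpleGraph.mem_neighborFinset],
        Finset.mem_insert_of_mem (by rwa [SimpleGraph.mem_neighborFinset])⟩
  apply hG
  refine ⟨fun v => if h : v = u then a else c' ⟨v, h⟩, ?_⟩
  intro v w hvw hadj
  by_cases hv : v = u <;> by_cases hw : w = u
  · exact absurd (hv.trans hw.symm) hvw
  · subst hv
    simp only [dif_pos rfl, dif_neg hw]
    intro heq
    apply ha
    rw [hF]
    refine Finset.mem_image.mpr ⟨w, hmem w hw hadj, ?_⟩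
    simp only [g, dif_neg hw]
    exact heq.symm
  · simp only [dif_neg hv, dif_pos hw]
    intro heq
    apply ha
    have hadj' : G.Adj u v ∨ ∃ x, G.Adj u x ∧ G.Adj x v := by
      rcases hadj with h | ⟨x, h1, h2⟩
      · exact Or.inl (hw ▸ h.symm)
      · exact Or.inr ⟨x, hw ▸ h2.symm, h1.symm⟩
    refine Finset.mem_image.mpr ⟨v, hmem v hv hadj', ?_⟩
    simp only [g, dif_neg hv]
    exact heq
  · simp only [dif_neg hv, dif_neg hw]
    apply hc' ⟨v, hv⟩ ⟨w, hw⟩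
    · intro h; exact hvw (congrArg Subtype.val h)
    · rcases hadj with h | ⟨x, h1, h2⟩
      · exact Or.inl h
      · by_cases hx : x = u
        · exfalso
          have hv' : v ∈ G.neighborFinset u := by
            rw [SimpleGraph.mem_neighborFinset]; exact (hx ▸ h1 : G.Adj v u).symm
          have hw' : w ∈ G.neighborFinset u := by
            rw [SimpleGraph.mem_neighborFinset]; exact (hx ▸ h2 : G.Adj u w)
          have : v = w := by
            by_contra hne
            have : 2 ≤ (G.neighborFinset u).card := by
              have : ({v, w} : Finset V) ⊆ G.neighborFinset u := by
                intro y hy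
                rcases Finset.mem_insert.mp hy with rfl | hy
                · exact hv'
                · rw [Finset.mem_singleton] at hy; subst hy; exact hw'
              calc 2 = ({v, w} : Finset V).card := (Finset.card_pair hne).symm
                _ ≤ _ := Finset.card_le_card this
            have hdd : G.degree u = (G.neighborFinset u).card := rfl
            omega
          exact hvw this
        · exact Or.inr ⟨⟨x, hx⟩, h1, h2⟩
end

section
/- Let G be a graph, v a vertex with deg(v) = 2 and neighbors v₁, v₂, and let G' = (G − v) + v₁v₂ (the edge v₁v₂ added if not already present). If G' admits a distance-2 coloring with k colors where k ≥ 2Δ(G) + 1, then G admits a distance-2 coloring with k colors. -/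
/-- Add the edge `ab` to a graph (no effect if already present or `a = b`). -/
def addEdge {W : Type*} (H : SimpleGraph W) (a b : W) : SimpleGraph W :=
  H ⊔ SimpleGraph.fromEdgeSet {s(a, b)}

/-- If `deg(v) = 2` with `N(v) = {v₁, v₂}` and `G' = (G - v) + v₁v₂` admits a
distance-2 coloring with `k ≥ 2Δ(G) + 1` colors, then so does `G`. -/
theorem stmt7 {V : Type*} [Fintype V] [DecidableEq V] (G : SimpleGraph V)
    [DecidableRel G.Adj] (v v₁ v₂ : V) (k : ℕ)
    (hdeg : G.degree v = 2) (h1 : G.Adj v v₁) (h2 : G.Adj v v₂) (hne : v₁ ≠ v₂)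
    (hk : 2 * G.maxDegree + 1 ≤ k)
    (hcol : ∃ c : {u : V | u ≠ v} → Fin k,
      IsDist2Coloring
        (addEdge (G.induce {u | u ≠ v}) ⟨v₁, h1.ne'⟩ ⟨v₂, h2.ne'⟩) c) :
    ∃ c : V → Fin k, IsDist2Coloring G c := by
  classical
  obtain ⟨c, hc⟩ := hcol
  -- N(v) = {v₁, v₂}
  have hNv : G.neighborFinset v = {v₁, v₂} := by
    symm
    apply Finset.eq_of_subset_of_card_le
    · intro x hx
      simp only [Finset.mem_insert, Finset.mem_singleton] at hx
      rcases hx with rfl | rfl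
      · simpa using h1
      · simpa using h2
    · rw [G.card_neighborFinset_eq_degree, hdeg]
      simp [Finset.card_insert_of_notMem, hne]
  -- the set of vertices within distance 2 of v (excluding v itself)
  set T : Finset V :=
    G.neighborFinset v ∪ (G.neighborFinset v₁).erase v ∪ (G.neighborFinset v₂).erase v with hT
  have hTv : ∀ x ∈ T, x ≠ v := by
    intro x hx
    simp only [hT, Finset.mem_union, Finset.mem_erase] at hx
    rcases hx with (hx | hx) | hx
    · rintro rfl
      exact G.loopless.irrefl _ ((G.mem_neighborFinset _ _).mp hx)
    · exact hx.1
    · exact hx.1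
  have hd1 : 1 ≤ G.degree v₁ := by
    rw [← G.card_neighborFinset_eq_degree]
    exact Finset.card_pos.mpr ⟨v, by simpa using h1.symm⟩
  have hd2 : 1 ≤ G.degree v₂ := by
    rw [← G.card_neighborFinset_eq_degree]
    exact Finset.card_pos.mpr ⟨v, by simpa using h2.symm⟩
  have hm1 : G.degree v₁ ≤ G.maxDegree := G.degree_le_maxDegree v₁
  have hm2 : G.degree v₂ ≤ G.maxDegree := G.degree_le_maxDegree v₂
  have hTcard : T.card ≤ 2 * G.maxDegree := by
    have e1 : ((G.neighborFinset v₁).erase v).card = G.degree v₁ - 1 := by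
      rw [Finset.card_erase_of_mem (by simpa using h1.symm), G.card_neighborFinset_eq_degree]
    have e2 : ((G.neighborFinset v₂).erase v).card = G.degree v₂ - 1 := by
      rw [Finset.card_erase_of_mem (by simpa using h2.symm), G.card_neighborFinset_eq_degree]
    have e0 : (G.neighborFinset v).card = 2 := by
      rw [G.card_neighborFinset_eq_degree, hdeg]
    calc T.card ≤ (G.neighborFinset v ∪ (G.neighborFinset v₁).erase v).card +
          ((G.neighborFinset v₂).erase v).card := Finset.card_union_le _ _
      _ ≤ (G.neighborFinset v).card + ((G.neighborFinset v₁).erase v).card +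
          ((G.neighborFinset v₂).erase v).card := by
            exact Nat.add_le_add_right (Finset.card_union_le _ _) _
      _ ≤ 2 * G.maxDegree := by rw [e0, e1, e2]; omega
  -- choose a color for v
  have hEx : ∃ Forb : Finset (Fin k), (∃ a : Fin k, a ∉ Forb) ∧
      ∀ w (hw : w ∈ T), c ⟨w, hTv w hw⟩ ∈ Forb := by
    refine ⟨T.attach.image (fun x => c ⟨x.1, hTv x.1 x.2⟩), ?_, ?_⟩
    · have hforb : (T.attach.image (fun x => c ⟨x.1, hTv x.1 x.2⟩)).card < k := by
        calc (T.attach.image _).card ≤ T.attach.card := Finset.card_image_le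
          _ = T.card := Finset.card_attach
          _ < k := by omega
      by_contra h
      push_neg at h
      have hsub : (Finset.univ : Finset (Fin k)) ⊆
          T.attach.image (fun x => c ⟨x.1, hTv x.1 x.2⟩) := fun a _ => h a
      have := Finset.card_le_card hsub
      simp only [Finset.card_univ, Fintype.card_fin] at this
      omega
    · intro w hw
      exact Finset.mem_image.mpr ⟨⟨w, hw⟩, Finset.mem_attach _ _, rfl⟩
  obtain ⟨Forb, ⟨a, ha⟩, hForb⟩ := hEx
  -- membership lemma
  have hmemT : ∀ w, w ≠ v → (G.Adj v w ∨ ∃ x, G.Adj v x ∧ G.Adj x w) → w ∈ T := by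
    intro w hw hadj
    rcases hadj with hadj | ⟨x, hx1, hx2⟩
    · simp only [hT, Finset.mem_union]
      left; left; simpa using hadj
    · have hx : x ∈ G.neighborFinset v := by simpa using hx1
      rw [hNv] at hx
      simp only [Finset.mem_insert, Finset.mem_singleton] at hx
      simp only [hT, Finset.mem_union, Finset.mem_erase]
      rcases hx with rfl | rfl
      · left; right; exact ⟨hw, by simpa using hx2⟩
      · right; exact ⟨hw, by simpa using hx2⟩
  have haT : ∀ w (hw : w ≠ v), w ∈ T → a ≠ c ⟨w, hw⟩ := by
    intro w hw hwT heq
    exact ha (heq ▸ hForb w hwT)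
  -- adjacency transfer to G'
  set G' := addEdge (G.induce {u : V | u ≠ v}) ⟨v₁, h1.ne'⟩ ⟨v₂, h2.ne'⟩ with hG'
  have hadjG' : ∀ (u w : V) (hu : u ≠ v) (hw : w ≠ v), G.Adj u w →
      G'.Adj ⟨u, hu⟩ ⟨w, hw⟩ := by
    intro u w hu hw h
    simp only [hG', addEdge, SimpleGraph.sup_adj]
    left
    exact h
  have hedge : G'.Adj ⟨v₁, h1.ne'⟩ ⟨v₂, h2.ne'⟩ := by
    simp only [hG', addEdge, SimpleGraph.sup_adj, SimpleGraph.fromEdgeSet_adj]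
    right
    refine ⟨by simp, ?_⟩
    simp [Subtype.ext_iff, hne]
  -- the coloring
  refine ⟨fun u => if h : u = v then a else c ⟨u, h⟩, ?_⟩
  -- key asymmetric case
  have key : ∀ w (hw : w ≠ v), (G.Adj v w ∨ ∃ x, G.Adj v x ∧ G.Adj x w) →
      a ≠ c ⟨w, hw⟩ := fun w hw hadj => haT w hw (hmemT w hw hadj)
  intro u w huw hadj
  show (if h : u = v then a else c ⟨u, h⟩) ≠ (if h : w = v then a else c ⟨w, h⟩)
  by_cases hu : u = v
  · have hw : w ≠ v := fun h => huw (hu.trans h.symm)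
    rw [dif_pos hu, dif_neg hw]
    subst hu
    exact key w hw hadj
  · by_cases hw : w = v
    · rw [dif_pos hw, dif_neg hu]
      have hadj' : G.Adj w u ∨ ∃ x, G.Adj w x ∧ G.Adj x u := by
        rcases hadj with h | ⟨x, hx1, hx2⟩
        · exact Or.inl h.symm
        · exact Or.inr ⟨x, hx2.symm, hx1.symm⟩
      subst hw
      exact (key u hu hadj').symm
    · simp only [dif_neg hu, dif_neg hw]
      apply hc ⟨u, hu⟩ ⟨w, hw⟩ (by simp [Subtype.ext_iff, huw])
      rcases hadj with h | ⟨x, hx1, hx2⟩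
      · exact Or.inl (hadjG' u w hu hw h)
      · by_cases hx : x = v
        · subst hx
          -- u, w ∈ N(x) = {v₁, v₂}, distinct
          have hu' : u ∈ G.neighborFinset x := by simpa using hx1.symm
          have hw' : w ∈ G.neighborFinset x := by simpa using hx2
          rw [hNv] at hu' hw'
          simp only [Finset.mem_insert, Finset.mem_singleton] at hu' hw'
          left
          rcases hu' with rfl | rfl <;> rcases hw' with rfl | rfl
          · exact absurd rfl huw
          · exact hedge
          · exact hedge.symm
          · exact absurd rfl huw
        · exact Or.inr ⟨⟨x, hx⟩, hadjG' u x hu hx hx1, hadjG' x w hx hw hx2⟩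
end

section
/- Let G be a graph with two adjacent vertices u, v both of degree 3, where N(v) = {u, v₁, v₂}. Let G' = (G − v) + uv₁ + uv₂. If G' admits a distance-2 coloring with k colors and k ≥ 2Δ(G) + 4, then G admits a distance-2 coloring with k colors. -/
/-- Let `u, v` be adjacent 3-vertices with `N(v) = {u, v₁, v₂}` and let
`G' = (G - v) + uv₁ + uv₂`. If `G'` admits a distance-2 coloring with
`k ≥ 2Δ(G) + 4` colors, then so does `G`. -/
theorem stmt8 {V : Type*} [Fintype V] [DecidableEq V] (G : SimpleGraph V)
    [DecidableRel G.Adj] (u v v₁ v₂ : V) (k : ℕ)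
    (hadj : G.Adj v u) (hdegu : G.degree u = 3) (hdegv : G.degree v = 3)
    (h1 : G.Adj v v₁) (h2 : G.Adj v v₂)
    (hN : G.neighborSet v = {u, v₁, v₂})
    (hk : 2 * G.maxDegree + 4 ≤ k)
    (hcol : ∃ c : {w : V | w ≠ v} → Fin k,
      IsDist2Coloring
        (addEdge (addEdge (G.induce {w | w ≠ v}) ⟨u, hadj.ne'⟩ ⟨v₁, h1.ne'⟩)
          ⟨u, hadj.ne'⟩ ⟨v₂, h2.ne'⟩) c) :
    ∃ c : V → Fin k, IsDist2Coloring G c := by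
  classical
  obtain ⟨c, hc⟩ := hcol
  have hΔu : G.degree u ≤ G.maxDegree := G.degree_le_maxDegree u
  have hkpos : 0 < k := by omega
  have hNf : G.neighborFinset v = {u, v₁, v₂} := by
    simp [SimpleGraph.neighborFinset, hN]
  have hcard3 : ({u, v₁, v₂} : Finset V).card = 3 := by
    rw [← hNf]; exact hdegv
  have huv1 : u ≠ v₁ := by
    intro h
    rw [← h, Finset.insert_idem] at hcard3
    have h2' := Finset.card_insert_le u ({v₂} : Finset V)
    rw [Finset.card_singleton] at h2'
    omega
  have huv2 : u ≠ v₂ := by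
    intro h
    rw [← h, Finset.insert_eq_self.mpr (by simp)] at hcard3
    have h2' := Finset.card_insert_le v₁ ({u} : Finset V)
    rw [Finset.card_singleton] at h2'
    omega
  -- membership characterization of neighbors of v
  have hNmem : ∀ w, G.Adj v w ↔ (w = u ∨ w = v₁ ∨ w = v₂) := by
    intro w
    have := Set.ext_iff.mp hN w
    simpa [SimpleGraph.mem_neighborSet] using this
  set S : Finset V :=
    (G.neighborFinset u ∪ G.neighborFinset v₁ ∪ G.neighborFinset v₂ ∪ {u, v₁, v₂}).erase v
    with hSdef
  have hScard : S.card ≤ 2 * G.maxDegree + 3 := by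
    have hsub : S ⊆ ((G.neighborFinset u).erase v ∪ (G.neighborFinset v₁).erase v
        ∪ (G.neighborFinset v₂).erase v ∪ {u, v₁, v₂}) := by
      intro w hw
      rw [hSdef, Finset.mem_erase] at hw
      obtain ⟨hwv, hw⟩ := hw
      simp only [Finset.mem_union] at hw ⊢
      rcases hw with ((h | h) | h) | h
      · exact Or.inl (Or.inl (Or.inl (Finset.mem_erase.mpr ⟨hwv, h⟩)))
      · exact Or.inl (Or.inl (Or.inr (Finset.mem_erase.mpr ⟨hwv, h⟩)))
      · exact Or.inl (Or.inr (Finset.mem_erase.mpr ⟨hwv, h⟩))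
      · exact Or.inr h
    have hcu : ((G.neighborFinset u).erase v).card = 2 := by
      rw [Finset.card_erase_of_mem (by simpa using hadj.symm)]
      rw [SimpleGraph.card_neighborFinset_eq_degree, hdegu]
    have hc1 : ((G.neighborFinset v₁).erase v).card ≤ G.maxDegree - 1 := by
      rw [Finset.card_erase_of_mem (by simpa using h1.symm)]
      have := G.degree_le_maxDegree v₁
      rw [SimpleGraph.card_neighborFinset_eq_degree]
      omega
    have hc2 : ((G.neighborFinset v₂).erase v).card ≤ G.maxDegree - 1 := by
      rw [Finset.card_erase_of_mem (by simpa using h2.symm)]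
      have := G.degree_le_maxDegree v₂
      rw [SimpleGraph.card_neighborFinset_eq_degree]
      omega
    have h3 : ({u, v₁, v₂} : Finset V).card ≤ 3 := by omega
    calc S.card ≤ _ := Finset.card_le_card hsub
      _ ≤ _ := le_trans (Finset.card_union_le _ _)
          (add_le_add (le_trans (Finset.card_union_le _ _)
            (add_le_add (Finset.card_union_le _ _) le_rfl)) le_rfl)
      _ ≤ 2 + (G.maxDegree - 1) + (G.maxDegree - 1) + 3 := by
          exact add_le_add (add_le_add (add_le_add hcu.le hc1) hc2) h3
      _ ≤ 2 * G.maxDegree + 3 := by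
          rw [hdegu] at hΔu; omega
  -- a total extension of c
  set g : V → Fin k := fun w => if h : w = v then ⟨0, hkpos⟩ else c ⟨w, h⟩ with hgdef
  have hex : ∃ a : Fin k, a ∉ S.image g := by
    by_contra h
    push_neg at h
    have hsub : (Finset.univ : Finset (Fin k)) ⊆ S.image g := fun a _ => h a
    have := Finset.card_le_card hsub
    have h2' := Finset.card_image_le (s := S) (f := g)
    simp only [Finset.card_univ, Fintype.card_fin] at this
    omega
  obtain ⟨a, ha⟩ := hex
  -- membership lemma
  have hmem : ∀ w, w ≠ v → (G.Adj v w ∨ ∃ x, G.Adj v x ∧ G.Adj x w) → w ∈ S := by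
    intro w hwv hd
    rw [hSdef, Finset.mem_erase]
    refine ⟨hwv, ?_⟩
    simp only [Finset.mem_union]
    rcases hd with h | ⟨x, hvx, hxw⟩
    · right
      rcases (hNmem w).mp h with h | h | h <;> simp [h]
    · rcases (hNmem x).mp hvx with h | h | h
      · subst h; exact Or.inl (Or.inl (Or.inl (by simpa using hxw)))
      · subst h; exact Or.inl (Or.inl (Or.inr (by simpa using hxw)))
      · subst h; exact Or.inl (Or.inr (by simpa using hxw))
  refine ⟨fun w => if h : w = v then a else c ⟨w, h⟩, ?_⟩
  intro x y hxy hd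
  by_cases hx : x = v
  · have hyv : y ≠ v := fun h => hxy (hx.trans h.symm)
    have hd' : G.Adj v y ∨ ∃ z, G.Adj v z ∧ G.Adj z y := hx ▸ hd
    have hyS : y ∈ S := hmem y hyv hd'
    rw [hx]
    have e1 : (fun w => if h : w = v then a else c ⟨w, h⟩) v = a := by simp
    have e2 : (fun w => if h : w = v then a else c ⟨w, h⟩) y = c ⟨y, hyv⟩ := by simp [hyv]
    rw [e1, e2]
    intro hcon
    exact ha (Finset.mem_image.mpr ⟨y, hyS, by rw [hgdef]; simp [hyv, hcon]⟩)
  · by_cases hy : y = v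
    · have hd' : G.Adj v x ∨ ∃ z, G.Adj v z ∧ G.Adj z x := by
        rw [hy] at hd
        rcases hd with h | ⟨z, h1', h2'⟩
        · exact Or.inl h.symm
        · exact Or.inr ⟨z, h2'.symm, h1'.symm⟩
      have hxS : x ∈ S := hmem x hx hd'
      rw [hy]
      have e1 : (fun w => if h : w = v then a else c ⟨w, h⟩) v = a := by simp
      have e2 : (fun w => if h : w = v then a else c ⟨w, h⟩) x = c ⟨x, hx⟩ := by simp [hx]
      rw [e1, e2]
      intro hcon
      exact ha (Finset.mem_image.mpr ⟨x, hxS, by rw [hgdef]; simp [hx, hcon.symm]⟩)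
    · -- both in the smaller graph
      simp only [dif_neg hx, dif_neg hy]
      apply hc ⟨x, hx⟩ ⟨y, hy⟩ (by simp [Subtype.ext_iff, hxy])
      rcases hd with h | ⟨z, h1', h2'⟩
      · left
        simp [addEdge, SimpleGraph.sup_adj, h]
      · by_cases hz : z = v
        · subst hz
          rcases (hNmem x).mp h1'.symm with hxu | hxu | hxu <;>
            rcases (hNmem y).mp h2' with hyu | hyu | hyu <;>
            subst hxu <;> subst hyu
          · exact absurd rfl hxy
          · left; simp [addEdge, SimpleGraph.sup_adj, SimpleGraph.fromEdgeSet_adj,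
              Subtype.ext_iff, huv1]
          · left; simp [addEdge, SimpleGraph.sup_adj, SimpleGraph.fromEdgeSet_adj,
              Subtype.ext_iff, huv2]
          · left; simp [addEdge, SimpleGraph.sup_adj, SimpleGraph.fromEdgeSet_adj,
              Subtype.ext_iff, huv1, hxy]
          · exact absurd rfl hxy
          · right
            refine ⟨⟨u, hadj.ne'⟩, ?_, ?_⟩ <;>
              simp [addEdge, SimpleGraph.sup_adj, SimpleGraph.fromEdgeSet_adj,
                Subtype.ext_iff, huv1, huv2, Ne.symm huv1, Ne.symm huv2]
          · left; simp [addEdge, SimpleGraph.sup_adj, SimpleGraph.fromEdgeSet_adj,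
              Subtype.ext_iff, huv2, hxy]
          · right
            refine ⟨⟨u, hadj.ne'⟩, ?_, ?_⟩ <;>
              simp [addEdge, SimpleGraph.sup_adj, SimpleGraph.fromEdgeSet_adj,
                Subtype.ext_iff, huv1, huv2, Ne.symm huv1, Ne.symm huv2]
          · exact absurd rfl hxy
        · right
          refine ⟨⟨z, hz⟩, ?_, ?_⟩ <;>
            simp [addEdge, SimpleGraph.sup_adj, h1', h2']
end

section
/- Let G be a graph containing a triangle v v₁ v₂ where deg(v) = 3 with N(v) = {v₁, v₂, v₃}. Let G' = (G − v) + v₁v₃. If G' admits a distance-2 coloring with k colors and k ≥ 3Δ(G) − 1, then G admits a distance-2 coloring with k colors. -/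
/-- Let `v v₁ v₂` be a triangle where `deg(v) = 3` with `N(v) = {v₁, v₂, v₃}`,
and let `G' = (G - v) + v₁v₃`. If `G'` admits a distance-2 coloring with
`k ≥ 3Δ(G) - 1` colors, then so does `G`. -/
theorem stmt9 {V : Type*} [Fintype V] [DecidableEq V] (G : SimpleGraph V)
    [DecidableRel G.Adj] (v v₁ v₂ v₃ : V) (k : ℕ)
    (h1 : G.Adj v v₁) (h2 : G.Adj v v₂) (h3 : G.Adj v v₃)
    (htri : G.Adj v₁ v₂)
    (hdeg : G.degree v = 3)
    (hN : G.neighborSet v = {v₁, v₂, v₃})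
    (hk : 3 * G.maxDegree - 1 ≤ k)
    (hcol : ∃ c : {u : V | u ≠ v} → Fin k,
      IsDist2Coloring
        (addEdge (G.induce {u | u ≠ v}) ⟨v₁, h1.ne'⟩ ⟨v₃, h3.ne'⟩) c) :
    ∃ c : V → Fin k, IsDist2Coloring G c := by
  classical
  obtain ⟨c, hc⟩ := hcol
  have hv1 : v₁ ≠ v := h1.ne'
  have hv2 : v₂ ≠ v := h2.ne'
  have hv3 : v₃ ≠ v := h3.ne'
  have hmem : ∀ w, G.Adj v w ↔ w = v₁ ∨ w = v₂ ∨ w = v₃ := by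
    intro w; rw [← SimpleGraph.mem_neighborSet, hN]; simp
  have hNF : G.neighborFinset v = {v₁, v₂, v₃} := by
    ext w; simp [hmem w]
  have hΔ : 3 ≤ G.maxDegree := hdeg ▸ G.degree_le_maxDegree v
  have h13 : v₁ ≠ v₃ := by
    intro h
    have h3card : ({v₁, v₂, v₃} : Finset V).card = 3 := by
      rw [← hNF]; exact hdeg
    subst h
    have heq : ({v₁, v₂, v₁} : Finset V) = {v₁, v₂} := by
      ext x; simp; tauto
    rw [heq] at h3card
    have : ({v₁, v₂} : Finset V).card ≤ 2 :=
      (Finset.card_insert_le _ _).trans (by simp)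
    omega
  set T : Finset V := insert v₃ ((G.neighborFinset v₁).erase v ∪
    (G.neighborFinset v₂).erase v ∪ (G.neighborFinset v₃).erase v) with hT
  have hTcard : T.card < k := by
    have e1 : ((G.neighborFinset v₁).erase v).card ≤ G.maxDegree - 1 := by
      rw [Finset.card_erase_of_mem (by simpa using h1.symm)]
      exact Nat.sub_le_sub_right (G.degree_le_maxDegree v₁) 1
    have e2 : ((G.neighborFinset v₂).erase v).card ≤ G.maxDegree - 1 := by
      rw [Finset.card_erase_of_mem (by simpa using h2.symm)]
      exact Nat.sub_le_sub_right (G.degree_le_maxDegree v₂) 1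
    have e3 : ((G.neighborFinset v₃).erase v).card ≤ G.maxDegree - 1 := by
      rw [Finset.card_erase_of_mem (by simpa using h3.symm)]
      exact Nat.sub_le_sub_right (G.degree_le_maxDegree v₃) 1
    have hu : ((G.neighborFinset v₁).erase v ∪ (G.neighborFinset v₂).erase v ∪
        (G.neighborFinset v₃).erase v).card ≤
        ((G.neighborFinset v₁).erase v).card + ((G.neighborFinset v₂).erase v).card +
        ((G.neighborFinset v₃).erase v).card :=
      (Finset.card_union_le _ _).trans (Nat.add_le_add_right (Finset.card_union_le _ _) _)
    have := Finset.card_insert_le v₃ ((G.neighborFinset v₁).erase v ∪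
      (G.neighborFinset v₂).erase v ∪ (G.neighborFinset v₃).erase v)
    rw [← hT] at this
    omega
  have hk0 : 0 < k := by omega
  set f : V → Fin k := fun u => if h : u = v then ⟨0, hk0⟩ else c ⟨u, h⟩ with hf
  have hex : ∃ a : Fin k, a ∉ T.image f := by
    by_contra hcon
    push_neg at hcon
    have hsub : (Finset.univ : Finset (Fin k)) ⊆ T.image f := fun a _ => hcon a
    have h1' := Finset.card_le_card hsub
    have h2' := Finset.card_image_le (s := T) (f := f)
    simp at h1'
    omega
  obtain ⟨a, ha⟩ := hex
  set c₀ : V → Fin k := fun u => if h : u = v then a else c ⟨u, h⟩ with hc₀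
  have hvT : v ∉ T := by
    simp only [hT, Finset.mem_insert, Finset.mem_union, Finset.mem_erase]
    rintro (h | (⟨h', _⟩ | ⟨h', _⟩) | ⟨h', _⟩)
    · exact hv3 h.symm
    all_goals exact h' rfl
  have hmain : ∀ w, w ≠ v → (G.Adj v w ∨ ∃ x, G.Adj v x ∧ G.Adj x w) → w ∈ T := by
    intro w hw hadj
    rcases hadj with h | ⟨x, hvx, hxw⟩
    · rcases (hmem w).1 h with rfl | rfl | rfl
      · exact Finset.mem_insert_of_mem (Finset.mem_union_left _
          (Finset.mem_union_right _ (Finset.mem_erase.2 ⟨hv1, by simpa using htri.symm⟩)))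
      · exact Finset.mem_insert_of_mem (Finset.mem_union_left _
          (Finset.mem_union_left _ (Finset.mem_erase.2 ⟨hv2, by simpa using htri⟩)))
      · exact Finset.mem_insert_self _ _
    · rcases (hmem x).1 hvx with rfl | rfl | rfl
      · exact Finset.mem_insert_of_mem (Finset.mem_union_left _
          (Finset.mem_union_left _ (Finset.mem_erase.2 ⟨hw, by simpa using hxw⟩)))
      · exact Finset.mem_insert_of_mem (Finset.mem_union_left _
          (Finset.mem_union_right _ (Finset.mem_erase.2 ⟨hw, by simpa using hxw⟩)))
      · exact Finset.mem_insert_of_mem (Finset.mem_union_right _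
          (Finset.mem_erase.2 ⟨hw, by simpa using hxw⟩))
  have key : ∀ w, w ≠ v → (G.Adj v w ∨ ∃ x, G.Adj v x ∧ G.Adj x w) → c₀ v ≠ c₀ w := by
    intro w hw hadj heq
    have hwT := hmain w hw hadj
    apply ha
    have : f w = a := by
      rw [hf]
      simp only [dif_neg hw]
      rw [hc₀] at heq
      simpa [dif_pos rfl, dif_neg hw] using heq.symm
    rw [← this]
    exact Finset.mem_image_of_mem f hwT
  -- adjacency transfer to G'
  set G' := addEdge (G.induce {u : V | u ≠ v}) ⟨v₁, h1.ne'⟩ ⟨v₃, h3.ne'⟩ with hG'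
  have hind : ∀ (a b : {u : V | u ≠ v}), G.Adj a.1 b.1 → G'.Adj a b := by
    intro a b h
    rw [hG']
    simp only [addEdge, SimpleGraph.sup_adj, SimpleGraph.comap_adj]
    left
    exact h
  have hedge : G'.Adj ⟨v₁, h1.ne'⟩ ⟨v₃, h3.ne'⟩ := by
    rw [hG']
    simp only [addEdge, SimpleGraph.sup_adj, SimpleGraph.fromEdgeSet_adj]
    right
    exact ⟨by simp, by simpa [Subtype.ext_iff] using h13⟩
  refine ⟨c₀, ?_⟩
  intro u w huw hadj
  rcases eq_or_ne u v with rfl | hu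
  · exact key w (Ne.symm huw) hadj
  · rcases eq_or_ne w v with heq | hw
    · rw [heq] at hadj ⊢
      have hadj' : G.Adj v u ∨ ∃ x, G.Adj v x ∧ G.Adj x u := by
        rcases hadj with h | ⟨x, ha1, ha2⟩
        · exact Or.inl h.symm
        · exact Or.inr ⟨x, ha2.symm, ha1.symm⟩
      exact (key u hu hadj').symm
    · -- both ≠ v
      have hne : (⟨u, hu⟩ : {x : V | x ≠ v}) ≠ ⟨w, hw⟩ := by
        simpa [Subtype.ext_iff] using huw
      have hadj' : G'.Adj ⟨u, hu⟩ ⟨w, hw⟩ ∨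
          ∃ x, G'.Adj ⟨u, hu⟩ x ∧ G'.Adj x ⟨w, hw⟩ := by
        rcases hadj with h | ⟨x, hux, hxw⟩
        · exact Or.inl (hind _ _ h)
        · rcases eq_or_ne x v with rfl | hx
          · -- u, w ∈ {v₁,v₂,v₃}
            have hu3 : u = v₁ ∨ u = v₂ ∨ u = v₃ := (hmem u).1 hux.symm
            have hw3 : w = v₁ ∨ w = v₂ ∨ w = v₃ := (hmem w).1 hxw
            rcases hu3 with rfl | rfl | rfl <;> rcases hw3 with rfl | rfl | rfl
            · exact absurd rfl huw
            · exact Or.inl (hind _ _ htri)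
            · exact Or.inl hedge
            · exact Or.inl (hind _ _ htri.symm)
            · exact absurd rfl huw
            · exact Or.inr ⟨⟨v₁, h1.ne'⟩, hind _ _ htri.symm, hedge⟩
            · exact Or.inl hedge.symm
            · exact Or.inr ⟨⟨v₁, h1.ne'⟩, hedge.symm, hind _ _ htri⟩
            · exact absurd rfl huw
          · exact Or.inr ⟨⟨x, hx⟩, hind _ _ hux, hind _ _ hxw⟩
      have := hc ⟨u, hu⟩ ⟨w, hw⟩ hne hadj'
      simpa [hc₀, dif_neg hu, dif_neg hw] using this
end
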